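/- Let σ be a Lie algebra automorphism of D_n = Der_K(P_n) fixing ∂_1, ..., ∂_n and H_1 = x_1∂_1, ..., H_n = x_n∂_n. Then σ is the identity automorphism of D_n. -/

import Mathlib

open MvPolynomial

section Aux
set_option linter.unusedSectionVars false
variable {n : ℕ} {K : Type*} [Field K] [CharZero K]

local notation "Pn" => MvPolynomial (Fin n) K
local notation "Dn" => Derivation K (MvPolynomial (Fin n) K) (MvPolynomial (Fin n) K)

private lemma aux_sum_apply {ι : Type*} (s : Finset ι) (f : ι → Dn) (p : Pn) :
    (∑ k ∈ s, f k) p = ∑ k ∈ s, f k p := by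
  classical
  induction s using Finset.cons_induction with
  | empty => simp
  | cons a s ha ih => rw [Finset.sum_cons, Finset.sum_cons, Derivation.add_apply, ih]

private lemma aux_C_smul (c : K) (D : Dn) : (C c : Pn) • D = c • D := by
  apply derivation_ext
  intro i
  simp [Derivation.smul_apply, smul_eq_mul, smul_eq_C_mul]

private lemma aux_decomp (d : Dn) : d = ∑ k, (d (X k)) • pderiv k := by
  apply derivation_ext
  intro i
  rw [aux_sum_apply, Finset.sum_eq_single i]
  · simp
  · intro k _ hk
    simp [Derivation.smul_apply, pderiv_X_of_ne (Ne.symm hk)]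
  · simp

private lemma aux_bracket_pderiv (m : Pn) (i j : Fin n) :
    ⁅(pderiv i : Dn), (m • pderiv j : Dn)⁆ = ((pderiv i m) • pderiv j : Dn) := by
  apply derivation_ext
  intro k
  simp only [Derivation.commutator_apply, Derivation.smul_apply, smul_eq_mul]
  rcases eq_or_ne j k with rfl | hjk
  · rcases eq_or_ne i j with rfl | hij
    · simp
    · simp [pderiv_X_of_ne (Ne.symm hij)]
  · rcases eq_or_ne i k with rfl | hik
    · simp [pderiv_X_of_ne (Ne.symm hjk)]
    · simp [pderiv_X_of_ne (Ne.symm hjk), pderiv_X_of_ne (Ne.symm hik)]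

private lemma aux_bracket_X_smul (m : Pn) (i j : Fin n) :
    ⁅((X i : Pn) • pderiv i : Dn), (m • pderiv j : Dn)⁆
      = (((X i : Pn) * pderiv i m) • pderiv j : Dn) - (if i = j then (m • pderiv i : Dn) else 0) := by
  apply derivation_ext
  intro k
  simp only [Derivation.commutator_apply, Derivation.smul_apply, Derivation.sub_apply,
    smul_eq_mul]
  rcases eq_or_ne j k with rfl | hjk
  · rcases eq_or_ne i j with rfl | hij
    · simp [mul_comm]
    · simp [pderiv_X_of_ne (Ne.symm hij), hij]
  · rcases eq_or_ne i k with rfl | hik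
    · have hij : i ≠ j := fun h => hjk (h ▸ rfl)
      simp [pderiv_X_of_ne (Ne.symm hjk), hij]
    · simp only [pderiv_X_of_ne (Ne.symm hjk), pderiv_X_of_ne (Ne.symm hik)]
      rcases eq_or_ne i j with rfl | hij
      · simp [Derivation.smul_apply, pderiv_X_of_ne (Ne.symm hik)]
      · simp [hij]

private lemma aux_X_mul_pd (α : Fin n →₀ ℕ) (i : Fin n) :
    (X i : Pn) * pderiv i (monomial α (1:K)) = ((α i : K)) • (monomial α 1 : Pn) := by
  classical
  rw [pderiv_monomial, one_mul]
  by_cases h : α i = 0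
  · simp [h]
  · rw [← pow_one (X i : Pn), ← monomial_single_add,
      add_tsub_cancel_of_le (Finsupp.single_le_iff.mpr (Nat.one_le_iff_ne_zero.mpr h)),
      smul_monomial, smul_eq_mul, mul_one]

private lemma aux_deg_sub (α : Fin n →₀ ℕ) (i : Fin n) (h : α i ≠ 0) :
    (∑ k, ((α - Finsupp.single i 1 : Fin n →₀ ℕ)) k) + 1 = ∑ k, α k := by
  classical
  have hle : ∀ k ∈ Finset.univ, Finsupp.single i 1 k ≤ α k := by
    intro k _
    rcases eq_or_ne k i with rfl | hk
    · simpa [Finsupp.single_apply] using Nat.one_le_iff_ne_zero.mpr h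
    · simp [Finsupp.single_apply, Ne.symm hk]
  have hsingle : (∑ k, Finsupp.single i (1:ℕ) k) = 1 := by
    rw [Finset.sum_eq_single i]
    · simp
    · intro k _ hk; simp [Finsupp.single_apply, Ne.symm hk]
    · simp
  have h1 : (∑ k, ((α - Finsupp.single i 1 : Fin n →₀ ℕ)) k) = ∑ k, (α k - Finsupp.single i 1 k) := by
    refine Finset.sum_congr rfl fun k _ => ?_
    rw [Finsupp.tsub_apply]
  rw [h1, Finset.sum_tsub_distrib _ hle, hsingle]
  have : 1 ≤ ∑ k, α k := le_trans (by simpa using Nat.one_le_iff_ne_zero.mpr h)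
    (Finset.single_le_sum (f := fun k => α k) (fun _ _ => Nat.zero_le _) (Finset.mem_univ i))
  omega

private lemma aux_sigma_smul (σ : Dn ≃ₗ⁅K⁆ Dn) (c : K) (D : Dn) : σ (c • D) = c • σ D :=
  map_smul σ.toLinearEquiv c D

set_option maxHeartbeats 1000000 in
private lemma aux_key (σ : Dn ≃ₗ⁅K⁆ Dn)
    (h1 : ∀ i : Fin n, σ (pderiv i) = pderiv i)
    (h2 : ∀ i : Fin n, σ ((X i : Pn) • pderiv i) = (X i : Pn) • pderiv i) :
    ∀ (N : ℕ) (α : Fin n →₀ ℕ), (∑ k, α k) ≤ N → ∀ j : Fin n,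
      σ ((monomial α (1:K) : Pn) • pderiv j) = (monomial α 1 : Pn) • pderiv j := by
  classical
  intro N
  induction N with
  | zero =>
    intro α hα j
    have h0 : α = 0 := by
      ext k
      have hk : α k ≤ ∑ x : Fin n, α x := by
        simpa using Finset.single_le_sum (f := fun k => α k) (fun _ _ => Nat.zero_le _)
          (Finset.mem_univ k)
      simp only [Finsupp.coe_zero, Pi.zero_apply]
      omega
    subst h0
    rw [show (monomial (0 : Fin n →₀ ℕ) (1:K) : Pn) = 1 by simp, one_smul]
    exact h1 j
  | succ N ih =>
    intro α hα j
    by_cases hz : α = 0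
    · subst hz
      rw [show (monomial (0 : Fin n →₀ ℕ) (1:K) : Pn) = 1 by simp, one_smul]
      exact h1 j
    set m : Pn := monomial α 1 with hm
    set d : Dn := m • pderiv j with hd
    set e : Dn := σ d - d with he
    have hsm : ∀ i : Fin n, σ ((pderiv i m : Pn) • pderiv j) = (pderiv i m : Pn) • pderiv j := by
      intro i
      by_cases hi : α i = 0
      · rw [hm, pderiv_monomial, one_mul, hi]
        simp only [Nat.cast_zero, monomial_zero, zero_smul]
        exact map_zero σ.toLinearEquiv
      · have hdeg : (∑ k, ((α - Finsupp.single i 1 : Fin n →₀ ℕ)) k) ≤ N := by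
          have := aux_deg_sub α i hi; omega
        have hih := ih (α - Finsupp.single i 1) hdeg j
        rw [hm, pderiv_monomial, one_mul,
          show (monomial (α - Finsupp.single i 1) ((α i : K)) : Pn)
              = (C ((α i : K)) : Pn) * monomial (α - Finsupp.single i 1) 1 by
            rw [C_mul_monomial, mul_one],
          mul_smul, aux_C_smul, aux_sigma_smul, hih]
    have hA : ∀ i : Fin n, ⁅(pderiv i : Dn), e⁆ = 0 := by
      intro i
      have hb := aux_bracket_pderiv m i j
      have hfix : ⁅(pderiv i : Dn), σ d⁆ = ⁅(pderiv i : Dn), d⁆ := by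
        calc ⁅(pderiv i : Dn), σ d⁆ = ⁅σ (pderiv i), σ d⁆ := by rw [h1 i]
          _ = σ ⁅(pderiv i : Dn), d⁆ := (LieEquiv.map_lie σ _ _).symm
          _ = σ ((pderiv i m : Pn) • pderiv j) := by rw [hd, hb]
          _ = (pderiv i m : Pn) • pderiv j := hsm i
          _ = ⁅(pderiv i : Dn), d⁆ := by rw [hd, hb]
      rw [he, lie_sub (pderiv i : Dn) (σ d) d, hfix, sub_self]
    have hB : ∀ i : Fin n, ⁅((X i : Pn) • pderiv i : Dn), e⁆
        = ((α i : K) - if i = j then 1 else 0) • e := by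
      intro i
      have hbd : ⁅((X i : Pn) • pderiv i : Dn), d⁆
          = ((α i : K) - if i = j then 1 else 0) • d := by
        rw [hd, aux_bracket_X_smul m i j, hm, aux_X_mul_pd, smul_assoc, ← hm]
        rcases eq_or_ne i j with rfl | hij
        · rw [if_pos rfl, if_pos rfl]
          module
        · rw [if_neg hij, if_neg hij]
          module
      have hfix : ⁅((X i : Pn) • pderiv i : Dn), σ d⁆
          = ((α i : K) - if i = j then 1 else 0) • σ d := by
        calc ⁅((X i : Pn) • pderiv i : Dn), σ d⁆
            = ⁅σ ((X i : Pn) • pderiv i), σ d⁆ := by rw [h2 i]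
          _ = σ ⁅((X i : Pn) • pderiv i : Dn), d⁆ := (LieEquiv.map_lie σ _ _).symm
          _ = σ (((α i : K) - if i = j then 1 else 0) • d) := by rw [hbd]
          _ = ((α i : K) - if i = j then 1 else 0) • σ d := aux_sigma_smul σ _ _
      rw [he, lie_sub ((X i : Pn) • pderiv i : Dn) (σ d) d, hfix, hbd, smul_sub]
    have hq' : ∀ (i k : Fin n), pderiv i (e (X k)) = 0 := by
      intro i k
      have h := congrArg (fun D : Dn => D (X k)) (hA i)
      simp only [Derivation.commutator_apply, Derivation.zero_apply] at h
      rcases eq_or_ne i k with rfl | hik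
      · rw [pderiv_X_self, Derivation.map_one_eq_zero, sub_zero] at h
        exact h
      · rw [pderiv_X_of_ne (Ne.symm hik), map_zero, sub_zero] at h
        exact h
    have hzero : ∀ k : Fin n, e (X k) = 0 := by
      intro k
      by_contra hq
      have keyeq : ∀ i : Fin n,
          ((α i : K) - (if i = j then 1 else 0) + (if i = k then 1 else 0)) = 0 := by
        intro i
        have h := congrArg (fun D : Dn => D (X k)) (hB i)
        simp only [Derivation.commutator_apply, Derivation.smul_apply, smul_eq_mul] at h
        rw [hq' i k, mul_zero] at h
        rw [smul_eq_C_mul] at h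
        rcases eq_or_ne i k with rfl | hik
        · rw [pderiv_X_self, mul_one] at h
          have h2 : (C ((α i : K) - (if i = j then 1 else 0) + 1) : Pn) * e (X i) = 0 := by
            rw [map_add, map_one]
            linear_combination -h
          rcases mul_eq_zero.mp h2 with h3 | h3
          · rw [if_pos rfl]
            exact (C_inj K _ 0).mp (by rwa [map_zero])
          · exact absurd h3 hq
        · rw [pderiv_X_of_ne (Ne.symm hik), mul_zero, map_zero, sub_zero] at h
          rw [if_neg hik, add_zero]
          rcases mul_eq_zero.mp h.symm with h3 | h3
          · exact (C_inj K _ 0).mp (by rwa [map_zero])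
          · exact absurd h3 hq
      obtain ⟨i₀, hi₀⟩ : ∃ i, α i ≠ 0 := by
        by_contra hcon
        push_neg at hcon
        exact hz (Finsupp.ext fun i => hcon i)
      rcases eq_or_ne i₀ j with rfl | h1j
      · rcases eq_or_ne i₀ k with rfl | h1k
        · have h₀ : ((α i₀ : ℕ) : K) - 1 + 1 = 0 := by simpa using keyeq i₀
          have : ((α i₀ : ℕ) : K) = 0 := by linear_combination h₀
          exact hi₀ (by exact_mod_cast this)
        · have hk : ((α k : ℕ) : K) + 1 = 0 := by simpa [Ne.symm h1k] using keyeq k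
          have : ((α k + 1 : ℕ) : K) = 0 := by push_cast; linear_combination hk
          exact absurd (Nat.cast_eq_zero.mp this) (by omega)
      · rcases eq_or_ne i₀ k with rfl | h1k
        · have h₀ : ((α i₀ : ℕ) : K) + 1 = 0 := by simpa [h1j] using keyeq i₀
          have : ((α i₀ + 1 : ℕ) : K) = 0 := by push_cast; linear_combination h₀
          exact absurd (Nat.cast_eq_zero.mp this) (by omega)
        · have h₀ : ((α i₀ : ℕ) : K) = 0 := by simpa [h1j, h1k] using keyeq i₀
          exact hi₀ (by exact_mod_cast h₀)
    have he0 : e = 0 := by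
      apply derivation_ext
      intro k
      rw [hzero k, Derivation.zero_apply]
    have := sub_eq_zero.mp (he ▸ he0)
    rw [hd] at this
    exact this

end Aux

/-- A Lie algebra automorphism of D_n = Der_K(P_n) fixing ∂_1,...,∂_n and
H_1 = x_1∂_1,...,H_n = x_n∂_n is the identity. -/
theorem lie_automorphism_fixing_partials_and_eulers (n : ℕ) (K : Type*) [Field K] [CharZero K]
    (σ : Derivation K (MvPolynomial (Fin n) K) (MvPolynomial (Fin n) K) ≃ₗ⁅K⁆
         Derivation K (MvPolynomial (Fin n) K) (MvPolynomial (Fin n) K))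
    (h1 : ∀ i : Fin n, σ (pderiv i) = pderiv i)
    (h2 : ∀ i : Fin n, σ ((X i : MvPolynomial (Fin n) K) • pderiv i) =
      (X i : MvPolynomial (Fin n) K) • pderiv i) :
    ∀ d, σ d = d := by
  intro d
  have hmono : ∀ (α : Fin n →₀ ℕ) (j : Fin n),
      σ ((monomial α (1:K) : MvPolynomial (Fin n) K) • pderiv j)
        = (monomial α 1 : MvPolynomial (Fin n) K) • pderiv j :=
    fun α j => aux_key σ h1 h2 (∑ k, α k) α le_rfl j
  have hpoly : ∀ (p : MvPolynomial (Fin n) K) (j : Fin n),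
      σ (p • pderiv j) = p • pderiv j := by
    intro p j
    induction p using MvPolynomial.induction_on' with
    | monomial α a =>
      rw [show (monomial α a : MvPolynomial (Fin n) K) = C a * monomial α 1 by
            rw [C_mul_monomial, mul_one],
        mul_smul, aux_C_smul, aux_sigma_smul, hmono]
    | add p q hp hq =>
      rw [add_smul]
      exact (map_add σ.toLinearEquiv _ _).trans (congrArg₂ (· + ·) hp hq)
  calc σ d = σ (∑ k, (d (X k)) • pderiv k) := by rw [← aux_decomp d]
    _ = ∑ k, σ ((d (X k)) • pderiv k) := map_sum σ.toLinearEquiv _ _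
    _ = ∑ k, (d (X k)) • pderiv k := Finset.sum_congr rfl fun k _ => hpoly _ k
    _ = d := (aux_decomp d).symm
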